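/- Let α be a composition of n and ρ ∈ S_n with w_0(α) ≤_L ρ. Then the diagram D_{α;ρ} produced by the paper's algorithm lies in 𝔇_n, and its source tableau reading word equals w_0(α) and its sink tableau reading word equals ρ; consequently Σ_R(P_{D_{α;ρ}}) = {w_0γ⁻¹ : γ ∈ [w_0(α), ρ]_L}. -/

import Mathlib

open Equiv

/-- Finset.filter with classical decidability. -/
noncomputable def cfilter {α : Type*} (p : α → Prop) (s : Finset α) : Finset α :=
  @Finset.filter α p (fun _ => Classical.propDecidable _) s

/-- Coxeter length of a permutation = number of inversions. -/
def len {n : ℕ} (σ : Perm (Fin n)) : ℕ :=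
  (Finset.univ.filter fun p : Fin n × Fin n => p.1 < p.2 ∧ σ p.2 < σ p.1).card

/-- The simple transposition `s_i = (i, i+1)` (0-indexed). -/
def simpleT {n : ℕ} (i : ℕ) (h : i + 1 < n) : Perm (Fin n) :=
  Equiv.swap ⟨i, Nat.lt_of_succ_lt h⟩ ⟨i + 1, h⟩

/-- Covering relation of the left weak Bruhat order. -/
def leftCov {n : ℕ} (σ τ : Perm (Fin n)) : Prop :=
  ∃ i, ∃ h : i + 1 < n, τ = simpleT i h * σ ∧ len σ < len τ

/-- The left weak Bruhat order. -/
def leftWeakLe {n : ℕ} : Perm (Fin n) → Perm (Fin n) → Prop :=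
  Relation.ReflTransGen leftCov

/-- The left weak Bruhat interval `[σ,ρ]_L`. -/
def leftInterval {n : ℕ} (σ ρ : Perm (Fin n)) : Set (Perm (Fin n)) :=
  {γ | leftWeakLe σ γ ∧ leftWeakLe γ ρ}

/-- `set(β)`: the partial sums `β₁, β₁+β₂, …` omitting the total sum (1-based values). -/
def psums (β : List ℕ) : Finset ℕ :=
  (Finset.range (β.length - 1)).image fun j => (β.take (j + 1)).sum

/-- The simple transpositions `{s_i : i ∈ S}` (with `i` 1-based, so `s_i` swaps
the 0-based positions `i-1` and `i`). -/
def genSet (n : ℕ) (S : Finset ℕ) : Set (Perm (Fin n)) :=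
  {g | ∃ i ∈ S, ∃ h : i < n, g = Equiv.swap ⟨i - 1, by omega⟩ ⟨i, h⟩}

/-- `g` is the longest element of the subgroup generated by `S`. -/
def IsLongest {n : ℕ} (S : Set (Perm (Fin n))) (g : Perm (Fin n)) : Prop :=
  g ∈ Subgroup.closure S ∧ ∀ h ∈ Subgroup.closure S, len h ≤ len g

/-- The left descent set `Des_L(ρ) = {i ∈ [n-1] : ℓ(s_i ρ) < ℓ(ρ)}` (1-based). -/
noncomputable def DesL {n : ℕ} (ρ : Perm (Fin n)) : Finset ℕ :=
  cfilter (fun i => ∃ h' : i - 1 < n, ∃ h : i < n,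
    len (Equiv.swap ⟨i - 1, h'⟩ ⟨i, h⟩ * ρ) < len ρ) (Finset.Ioo 0 n)

/-- The diagram `D_{α;ρ}` produced by the algorithm, for a composition `α` of `n`
with `set(α) = S`: a box `(i,j)` belongs to `D_{α;ρ}` iff `R_j ∩ C_i ≠ ∅`, i.e.
iff there is a (1-based) position `r` whose block in the `set(α^c)`-partition of
`[n]` is `j` and such that the block of the value `ρ(r)` in the
`Des_L(ρ)`-partition of `[n]` is `i`. -/
noncomputable def Dalg {n : ℕ} (S : Finset ℕ) (ρ : Perm (Fin n)) : Finset (ℕ × ℕ) :=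
  Finset.image (fun p : Fin n =>
    (1 + ((DesL ρ).filter fun k => k < (ρ p : ℕ) + 1).card,
     1 + (((Finset.Icc 1 (n - 1)) \ S).filter fun z => z < (p : ℕ) + 1).card))
    Finset.univ

/-- Row-reading enumeration: rows top to bottom, within a row left to right. -/
def RowEnum {n : ℕ} (e : Fin n → ℕ × ℕ) : Prop :=
  ∀ i j : Fin n, i < j ↔ ((e j).2 < (e i).2 ∨ ((e i).2 = (e j).2 ∧ (e i).1 < (e j).1))

/-- Filling order of the sink standard tableau: columns left to right, bottom to top. -/
def ColEnum {n : ℕ} (t : Fin n → ℕ × ℕ) : Prop :=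
  ∀ i j : Fin n, i < j ↔ ((t i).1 < (t j).1 ∨ ((t i).1 = (t j).1 ∧ (t i).2 < (t j).2))

/-- Filling order of the source standard tableau: rows bottom to top, left to right. -/
def SrcEnum {n : ℕ} (u : Fin n → ℕ × ℕ) : Prop :=
  ∀ i j : Fin n, i < j ↔ ((u i).2 < (u j).2 ∨ ((u i).2 = (u j).2 ∧ (u i).1 < (u j).1))

/-- Reading order of `read`: rows bottom to top, within a row right to left. -/
def ReadEnum {n : ℕ} (r : Fin n → ℕ × ℕ) : Prop :=
  ∀ i j : Fin n, i < j ↔ ((r i).2 < (r j).2 ∨ ((r i).2 = (r j).2 ∧ (r j).1 < (r i).1))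

/-- Membership in `𝔇_n`: no empty rows or columns. -/
def DiagOK (D : Finset (ℕ × ℕ)) : Prop :=
  (∃ l, D.image Prod.fst = Finset.Icc 1 l) ∧ (∃ k, D.image Prod.snd = Finset.Icc 1 k)

/-- `Σ_R(P_D)` for the canonical poset `P_D` labeled via the row-reading
enumeration `e`. -/
def SigmaRD {n : ℕ} (e : Fin n → ℕ × ℕ) : Set (Perm (Fin n)) :=
  {γ | ∀ i j : Fin n,
    ((e i).1 ≤ (e j).1 ∧ (e i).2 ≤ (e j).2 ∧ i ≠ j) → γ⁻¹ i < γ⁻¹ j}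


theorem Equiv.Perm.apply_inv_self {α : Type*} (f : Perm α) (x : α) : f (f⁻¹ x) = x :=
  f.apply_symm_apply x

theorem Equiv.Perm.inv_apply_self {α : Type*} (f : Perm α) (x : α) : f⁻¹ (f x) = x :=
  f.symm_apply_apply x

namespace AlgPf
open Finset

variable {n : ℕ}

/-- The inversion set of a permutation, as a finset of ordered position pairs. -/
def finInv (σ : Perm (Fin n)) : Finset (Fin n × Fin n) :=
  Finset.univ.filter fun p => p.1 < p.2 ∧ σ p.2 < σ p.1

lemma len_eq (σ : Perm (Fin n)) : len σ = (finInv σ).card := rfl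

lemma mem_finInv {σ : Perm (Fin n)} {x : Fin n × Fin n} :
    x ∈ finInv σ ↔ x.1 < x.2 ∧ σ x.2 < σ x.1 := by
  simp [finInv]

lemma swap_lt {A B : Fin n} (hAB : (A : ℕ) + 1 = (B : ℕ)) {x y : Fin n} (hxy : x < y)
    (hne : ¬(x = A ∧ y = B)) :
    Equiv.swap A B x < Equiv.swap A B y := by
  have hABlt : A < B := by rw [Fin.lt_def]; omega
  by_cases hxA : x = A
  · have hyB : y ≠ B := fun hy => hne ⟨hxA, hy⟩
    have hyA : y ≠ A := by rw [← hxA]; exact ne_of_gt hxy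
    rw [hxA, Equiv.swap_apply_left, Equiv.swap_apply_of_ne_of_ne hyA hyB]
    rw [Fin.lt_def]
    have h1 : (A : ℕ) < (y : ℕ) := by rw [← Fin.lt_def, ← hxA]; exact hxy
    have h2 : (y : ℕ) ≠ (B : ℕ) := fun hc => hyB (Fin.ext hc)
    omega
  · by_cases hxB : x = B
    · have hyB : y ≠ B := by rw [← hxB]; exact ne_of_gt hxy
      have hyA : y ≠ A := by
        intro hc
        rw [hxB, hc] at hxy
        exact absurd (lt_trans hABlt hxy) (lt_irrefl _)
      rw [hxB, Equiv.swap_apply_right, Equiv.swap_apply_of_ne_of_ne hyA hyB]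
      rw [← hxB] at hABlt
      exact lt_trans hABlt hxy
    · rw [Equiv.swap_apply_of_ne_of_ne hxA hxB]
      by_cases hyA : y = A
      · rw [hyA, Equiv.swap_apply_left]
        rw [hyA] at hxy
        exact lt_trans hxy hABlt
      · by_cases hyB : y = B
        · rw [hyB, Equiv.swap_apply_right]
          rw [Fin.lt_def]
          have h1 : (x : ℕ) < (B : ℕ) := by rw [← Fin.lt_def, ← hyB]; exact hxy
          have h2 : (x : ℕ) ≠ (A : ℕ) := fun hc => hxA (Fin.ext hc)
          omega
        · rw [Equiv.swap_apply_of_ne_of_ne hyA hyB]; exact hxy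

lemma finInv_swap_mul {A B : Fin n} (hAB : (A : ℕ) + 1 = (B : ℕ)) (σ : Perm (Fin n))
    (hlt : σ⁻¹ A < σ⁻¹ B) :
    finInv (Equiv.swap A B * σ) = insert (σ⁻¹ A, σ⁻¹ B) (finInv σ)
    ∧ (σ⁻¹ A, σ⁻¹ B) ∉ finInv σ := by
  have hABlt : A < B := by rw [Fin.lt_def]; omega
  have hnotmem : (σ⁻¹ A, σ⁻¹ B) ∉ finInv σ := by
    rw [mem_finInv]
    rintro ⟨-, h2⟩
    simp only [Equiv.Perm.apply_inv_self] at h2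
    exact absurd (lt_trans h2 hABlt) (lt_irrefl _)
  refine ⟨?_, hnotmem⟩
  ext ⟨p, q⟩
  simp only [mem_finInv, Finset.mem_insert, Prod.mk.injEq, Equiv.Perm.mul_apply]
  constructor
  · rintro ⟨hpq, hinv⟩
    by_cases hc : p = σ⁻¹ A ∧ q = σ⁻¹ B
    · exact Or.inl hc
    · refine Or.inr ⟨hpq, ?_⟩
      rcases lt_trichotomy (σ q) (σ p) with h1 | h1 | h1
      · exact h1
      · exact absurd (σ.injective h1.symm) (ne_of_lt hpq)
      · exfalso
        have hne2 : ¬(σ p = A ∧ σ q = B) := by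
          rintro ⟨e1, e2⟩
          exact hc ⟨by rw [← e1, Equiv.Perm.inv_apply_self],
                    by rw [← e2, Equiv.Perm.inv_apply_self]⟩
        exact absurd (swap_lt hAB h1 hne2)
          (fun hh => absurd (lt_trans hh hinv) (lt_irrefl _))
  · rintro (⟨e1, e2⟩ | ⟨hpq, hinv⟩)
    · subst e1; subst e2
      refine ⟨hlt, ?_⟩
      simp only [Equiv.Perm.apply_inv_self]
      rw [Equiv.swap_apply_left, Equiv.swap_apply_right]
      exact hABlt
    · refine ⟨hpq, ?_⟩
      have hne2 : ¬(σ q = A ∧ σ p = B) := by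
        rintro ⟨e1, e2⟩
        have hq : q = σ⁻¹ A := by rw [← e1, Equiv.Perm.inv_apply_self]
        have hp : p = σ⁻¹ B := by rw [← e2, Equiv.Perm.inv_apply_self]
        rw [hq, hp] at hpq
        exact absurd (lt_trans hpq hlt) (lt_irrefl _)
      exact swap_lt hAB hinv hne2

lemma len_swap_mul_lt {A B : Fin n} (hAB : (A : ℕ) + 1 = (B : ℕ)) (σ : Perm (Fin n))
    (hlt : σ⁻¹ A < σ⁻¹ B) :
    len (Equiv.swap A B * σ) = len σ + 1 := by
  obtain ⟨h1, h2⟩ := finInv_swap_mul hAB σ hlt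
  rw [len_eq, len_eq, h1, Finset.card_insert_of_notMem h2]

lemma swap_mul_cancel (A B : Fin n) (σ : Perm (Fin n)) :
    Equiv.swap A B * (Equiv.swap A B * σ) = σ := by
  rw [← mul_assoc, Equiv.swap_mul_self, one_mul]

lemma finInv_swap_mul' {A B : Fin n} (hAB : (A : ℕ) + 1 = (B : ℕ)) (σ : Perm (Fin n))
    (hlt : σ⁻¹ B < σ⁻¹ A) :
    finInv σ = insert (σ⁻¹ B, σ⁻¹ A) (finInv (Equiv.swap A B * σ))
    ∧ (σ⁻¹ B, σ⁻¹ A) ∉ finInv (Equiv.swap A B * σ) := by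
  set s := Equiv.swap A B with hs
  have key1 : (s * σ)⁻¹ A = σ⁻¹ B := by
    rw [mul_inv_rev]
    simp only [Equiv.Perm.mul_apply]
    rw [hs, Equiv.swap_inv, Equiv.swap_apply_left]
  have key2 : (s * σ)⁻¹ B = σ⁻¹ A := by
    rw [mul_inv_rev]
    simp only [Equiv.Perm.mul_apply]
    rw [hs, Equiv.swap_inv, Equiv.swap_apply_right]
  have := finInv_swap_mul hAB (s * σ) (by rw [key1, key2]; exact hlt)
  rw [key1, key2, ← hs, swap_mul_cancel A B σ] at this
  exact this

lemma len_swap_mul_gt {A B : Fin n} (hAB : (A : ℕ) + 1 = (B : ℕ)) (σ : Perm (Fin n))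
    (hlt : σ⁻¹ B < σ⁻¹ A) :
    len σ = len (Equiv.swap A B * σ) + 1 := by
  obtain ⟨h1, h2⟩ := finInv_swap_mul' hAB σ hlt
  rw [len_eq, len_eq, h1, Finset.card_insert_of_notMem h2]

lemma len_inv (σ : Perm (Fin n)) : len σ⁻¹ = len σ := by
  rw [len_eq, len_eq]
  apply Finset.card_nbij' (fun x : Fin n × Fin n => (σ⁻¹ x.2, σ⁻¹ x.1))
      (fun x : Fin n × Fin n => (σ x.2, σ x.1))
  · intro x hx
    rw [Finset.mem_coe, mem_finInv] at hx
    rw [Finset.mem_coe, mem_finInv]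
    simp only [Equiv.Perm.apply_inv_self]
    exact ⟨hx.2, hx.1⟩
  · intro x hx
    rw [Finset.mem_coe, mem_finInv] at hx
    rw [Finset.mem_coe, mem_finInv]
    simp only [Equiv.Perm.inv_apply_self]
    exact ⟨hx.2, hx.1⟩
  · intro x _; simp
  · intro x _; simp

lemma strictMono_le_apply {f : Fin n → Fin n} (hf : StrictMono f) :
    ∀ k, ∀ x : Fin n, (x : ℕ) = k → k ≤ (f x : ℕ) := by
  intro k
  induction k with
  | zero => intro x _; omega
  | succ k ih =>
    intro x hx
    have hlt : k < n := by have := x.isLt; omega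
    have h1 : (⟨k, hlt⟩ : Fin n) < x := by rw [Fin.lt_def]; simp; omega
    have h2 := ih ⟨k, hlt⟩ rfl
    have h3 := hf h1
    rw [Fin.lt_def] at h3
    omega

lemma strictMono_ge_apply {f : Fin n → Fin n} (hf : StrictMono f) :
    ∀ k, ∀ x : Fin n, (x : ℕ) + k + 1 = n → (f x : ℕ) ≤ (x : ℕ) := by
  intro k
  induction k with
  | zero => intro x hx; have := (f x).isLt; omega
  | succ k ih =>
    intro x hx
    have hlt : (x : ℕ) + 1 < n := by omega
    have h1 : x < (⟨(x : ℕ) + 1, hlt⟩ : Fin n) := by rw [Fin.lt_def]; simp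
    have h2 := ih ⟨(x : ℕ) + 1, hlt⟩ (by simp; omega)
    have h3 := hf h1
    rw [Fin.lt_def] at h3
    simp at h2
    omega

lemma strictMono_fin_id {f : Fin n → Fin n} (hf : StrictMono f) (x : Fin n) : f x = x := by
  have h1 := strictMono_le_apply hf (x : ℕ) x rfl
  have h2 := strictMono_ge_apply hf (n - 1 - (x : ℕ)) x (by have := x.isLt; omega)
  exact Fin.ext (by omega)

lemma card_lt_filter (σ : Perm (Fin n)) (p : Fin n) :
    (Finset.univ.filter fun q => σ q < σ p).card = (σ p : ℕ) := by
  rw [← Fin.card_Iio (σ p)]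
  apply Finset.card_nbij' (fun q => σ q) (fun v => σ⁻¹ v)
  · intro q hq
    simp only [Finset.mem_coe, Finset.mem_filter, Finset.mem_univ, true_and] at hq
    simpa using hq
  · intro v hv
    simp only [Finset.mem_coe, Finset.mem_Iio] at hv
    simp only [Finset.mem_coe, Finset.mem_filter, Finset.mem_univ, true_and, Equiv.Perm.apply_inv_self]
    exact hv
  · intro q _; simp
  · intro v _; simp

lemma apply_val_eq (σ : Perm (Fin n)) (p : Fin n) :
    (σ p : ℕ) = ((Finset.Iio p).filter fun q => (q, p) ∉ finInv σ).card
      + ((Finset.Ioi p).filter fun q => (p, q) ∈ finInv σ).card := by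
  rw [← card_lt_filter σ p]
  rw [← Finset.card_union_of_disjoint]
  · congr 1
    ext q
    simp only [Finset.mem_filter, Finset.mem_univ, true_and, Finset.mem_union,
      Finset.mem_Iio, Finset.mem_Ioi, mem_finInv]
    constructor
    · intro hlt
      rcases lt_trichotomy q p with h | h | h
      · left
        refine ⟨h, ?_⟩
        rintro ⟨-, hc⟩
        exact absurd (lt_trans hc hlt) (lt_irrefl _)
      · exfalso; rw [h] at hlt; exact lt_irrefl _ hlt
      · exact Or.inr ⟨h, h, hlt⟩
    · rintro (⟨hq, hn⟩ | ⟨-, -, h2⟩)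
      · rcases lt_trichotomy (σ q) (σ p) with h | h | h
        · exact h
        · exact absurd (σ.injective h) (ne_of_lt hq)
        · exact absurd ⟨hq, h⟩ hn
      · exact h2
  · apply Finset.disjoint_left.mpr
    intro q h1 h2
    simp only [Finset.mem_filter, Finset.mem_Iio] at h1
    simp only [Finset.mem_filter, Finset.mem_Ioi] at h2
    exact absurd (lt_trans h1.1 h2.1) (lt_irrefl _)

lemma perm_eq_of_finInv_eq {σ τ : Perm (Fin n)} (h : finInv σ = finInv τ) : σ = τ := by
  apply Equiv.ext
  intro p
  apply Fin.ext
  rw [apply_val_eq σ p, apply_val_eq τ p, h]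

lemma perm_eq_one_of_finInv_empty {σ : Perm (Fin n)} (h : finInv σ = ∅) : σ = 1 := by
  have hmono : StrictMono σ := by
    intro p q hpq
    rcases lt_trichotomy (σ p) (σ q) with h1 | h1 | h1
    · exact h1
    · exact absurd (σ.injective h1) (ne_of_lt hpq)
    · exfalso
      have : (p, q) ∈ finInv σ := mem_finInv.mpr ⟨hpq, h1⟩
      rw [h] at this
      exact absurd this (Finset.notMem_empty _)
  exact Equiv.ext fun x => strictMono_fin_id hmono x

lemma chain_mono' (σ : Perm (Fin n)) :
    ∀ (d p : ℕ) (hp : p + d < n),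
    (∀ (r : ℕ) (h1 : r + 1 < n), p ≤ r → r < p + d → σ ⟨r, by omega⟩ < σ ⟨r + 1, h1⟩) →
    σ ⟨p, by omega⟩ ≤ σ ⟨p + d, hp⟩ := by
  intro d
  induction d with
  | zero =>
    intro p hp _
    exact le_of_eq (congrArg σ (Fin.ext (by simp)))
  | succ d ih =>
    intro p hp hstep
    have h1 : σ ⟨p, by omega⟩ ≤ σ ⟨p + d, by omega⟩ :=
      ih p (by omega) (fun r h1 hr1 hr2 => hstep r h1 hr1 (by omega))
    have h2 : σ ⟨p + d, by omega⟩ < σ ⟨p + (d + 1), hp⟩ :=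
      hstep (p + d) (by omega) (by omega) (by omega)
    exact le_of_lt (lt_of_le_of_lt h1 h2)

lemma exists_adjacent_desc (σ : Perm (Fin n)) {p q : Fin n} (hpq : p < q)
    (hdesc : σ q < σ p) :
    ∃ (r : ℕ) (h1 : r + 1 < n), (p : ℕ) ≤ r ∧ r < (q : ℕ) ∧
      σ ⟨r + 1, h1⟩ < σ ⟨r, by omega⟩ := by
  by_contra hcon
  push_neg at hcon
  have hpq' : (p : ℕ) < (q : ℕ) := hpq
  have hle : σ p ≤ σ q := by
    have hsteps : ∀ (r : ℕ) (h1 : r + 1 < n), (p : ℕ) ≤ r →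
        r < (p : ℕ) + ((q : ℕ) - (p : ℕ)) → σ ⟨r, by omega⟩ < σ ⟨r + 1, h1⟩ := by
      intro r h1 hr1 hr2
      have hle2 := hcon r h1 hr1 (by omega)
      have hne : σ ⟨r, by omega⟩ ≠ σ ⟨r + 1, h1⟩ := by
        intro hc2
        have heq : (⟨r, by omega⟩ : Fin n) = ⟨r + 1, h1⟩ := σ.injective hc2
        rw [Fin.ext_iff] at heq
        simp at heq
      exact lt_of_le_of_ne hle2 hne
    have key := chain_mono' σ ((q : ℕ) - (p : ℕ)) (p : ℕ)
      (by have := q.isLt; omega) hsteps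
    have e1 : (⟨(p : ℕ), by omega⟩ : Fin n) = p := Fin.ext rfl
    have e2 : (⟨(p : ℕ) + ((q : ℕ) - (p : ℕ)), by have := q.isLt; omega⟩ : Fin n) = q :=
      Fin.ext (by simp; omega)
    rw [e1, e2] at key
    exact key
  exact absurd (lt_of_lt_of_le hdesc hle) (lt_irrefl _)

lemma exists_adjacent_asc (σ : Perm (Fin n)) {p q : Fin n} (hpq : p < q)
    (hasc : σ p < σ q) :
    ∃ (r : ℕ) (h1 : r + 1 < n), (p : ℕ) ≤ r ∧ r < (q : ℕ) ∧
      σ ⟨r, by omega⟩ < σ ⟨r + 1, h1⟩ := by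
  have hrev : ((Fin.revPerm : Perm (Fin n)) * σ) q < ((Fin.revPerm : Perm (Fin n)) * σ) p := by
    simp only [Equiv.Perm.mul_apply, Fin.revPerm_apply]
    exact Fin.rev_lt_rev.mpr hasc
  obtain ⟨r, h1, hr1, hr2, hr3⟩ :=
    exists_adjacent_desc ((Fin.revPerm : Perm (Fin n)) * σ) hpq hrev
  refine ⟨r, h1, hr1, hr2, ?_⟩
  simp only [Equiv.Perm.mul_apply, Fin.revPerm_apply] at hr3
  exact Fin.rev_lt_rev.mp hr3

lemma leftWeakLe_finInv_subset {σ τ : Perm (Fin n)} (h : leftWeakLe σ τ) :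
    finInv σ ⊆ finInv τ := by
  induction h with
  | refl => exact Finset.Subset.refl _
  | tail hst hcov ih =>
    rename_i b c
    obtain ⟨i, hi, hcb, hlen⟩ := hcov
    set A : Fin n := ⟨i, Nat.lt_of_succ_lt hi⟩ with hA
    set B : Fin n := ⟨i + 1, hi⟩ with hB
    have hAB : (A : ℕ) + 1 = (B : ℕ) := rfl
    have hcb' : c = Equiv.swap A B * b := hcb
    rcases lt_trichotomy (b⁻¹ A) (b⁻¹ B) with hlt | hlt | hlt
    · obtain ⟨h1, -⟩ := finInv_swap_mul hAB b hlt
      rw [hcb', h1]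
      exact ih.trans (Finset.subset_insert _ _)
    · exfalso
      have : A = B := by
        have := congrArg b hlt
        simpa using this
      rw [Fin.ext_iff] at this
      simp [hA, hB] at this
    · exfalso
      have hlen2 := len_swap_mul_gt hAB b hlt
      rw [← hcb'] at hlen2
      omega

lemma len_le_of_leftWeakLe {σ τ : Perm (Fin n)} (h : leftWeakLe σ τ) : len σ ≤ len τ :=
  Finset.card_le_card (leftWeakLe_finInv_subset h)

lemma eq_of_leftWeakLe_len_ge {σ τ : Perm (Fin n)} (h : leftWeakLe σ τ)
    (hlen : len τ ≤ len σ) : σ = τ :=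
  perm_eq_of_finInv_eq
    (Finset.eq_of_subset_of_card_le (leftWeakLe_finInv_subset h) hlen)

lemma adj_value_pair {σ τ : Perm (Fin n)} (hsub : finInv σ ⊆ finInv τ) :
    ∀ (g : ℕ) (x : Fin n × Fin n), x ∈ finInv τ → x ∉ finInv σ →
      (τ x.1 : ℕ) - (τ x.2 : ℕ) ≤ g →
      ∃ y : Fin n × Fin n, y ∈ finInv τ ∧ y ∉ finInv σ ∧ (τ y.1 : ℕ) = (τ y.2 : ℕ) + 1 := by
  intro g
  induction g with
  | zero =>
    intro x hx _ hgap
    obtain ⟨-, h2⟩ := mem_finInv.mp hx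
    rw [Fin.lt_def] at h2
    omega
  | succ g ih =>
    intro x hxτ hxσ hgap
    obtain ⟨hqp, hba⟩ := mem_finInv.mp hxτ
    set q := x.1 with hq
    set p := x.2 with hp
    have hab : (τ p : ℕ) < (τ q : ℕ) := hba
    by_cases hadj : (τ q : ℕ) = (τ p : ℕ) + 1
    · exact ⟨x, hxτ, hxσ, hadj⟩
    · have hc : (τ p : ℕ) + 1 < n := by have := (τ q).isLt; omega
      set C : Fin n := ⟨(τ p : ℕ) + 1, hc⟩ with hC
      set m : Fin n := τ⁻¹ C with hm
      have hτm : τ m = C := Equiv.Perm.apply_inv_self τ C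
      have hσqp : σ q < σ p := by
        rcases lt_trichotomy (σ q) (σ p) with h | h | h
        · exact h
        · exact absurd (σ.injective h) (ne_of_lt hqp)
        · exact absurd (mem_finInv.mpr ⟨hqp, h⟩) hxσ
      have hmp : m ≠ p := by
        intro hc2
        rw [hc2] at hτm
        rw [Fin.ext_iff, hC] at hτm
        simp at hτm
      have hmq : m ≠ q := by
        intro hc2
        rw [hc2] at hτm
        have : (τ q : ℕ) = (τ p : ℕ) + 1 := by rw [hτm]
        exact hadj this
      rcases lt_trichotomy m q with hmlt | hmeq | hmgt
      · -- m < q : (m, p) is an adjacent-value pair not in finInv σ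
        refine ⟨(m, p), mem_finInv.mpr ⟨lt_trans hmlt hqp, ?_⟩, ?_, ?_⟩
        · rw [hτm]; rw [Fin.lt_def]; simp [hC]
        · intro hmem
          obtain ⟨-, h2⟩ := mem_finInv.mp hmem
          -- h2 : σ p < σ m ; then (m, q) ∈ finInv σ
          have : (m, q) ∈ finInv σ := mem_finInv.mpr ⟨hmlt, lt_trans hσqp h2⟩
          have := mem_finInv.mp (hsub this)
          obtain ⟨-, h3⟩ := this
          rw [hτm] at h3
          rw [Fin.lt_def] at h3
          simp [hC] at h3
          omega
        · simp only []
          rw [hτm]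
      · exact absurd hmeq hmq
      · rcases lt_trichotomy m p with hmlt2 | hmeq2 | hmgt2
        · -- q < m < p : consider (q, m)
          by_cases hqmσ : (q, m) ∈ finInv σ
          · -- then (m, p) works
            obtain ⟨-, h2⟩ := mem_finInv.mp hqmσ
            refine ⟨(m, p), mem_finInv.mpr ⟨hmlt2, ?_⟩, ?_, ?_⟩
            · rw [hτm]; rw [Fin.lt_def]; simp [hC]
            · intro hmem
              obtain ⟨-, h3⟩ := mem_finInv.mp hmem
              exact absurd (lt_trans (lt_trans h3 h2) hσqp) (lt_irrefl _)
            · simp only []; rw [hτm]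
          · apply ih (q, m) (mem_finInv.mpr ⟨hmgt, ?_⟩) hqmσ ?_
            · rw [hτm, Fin.lt_def]; simp [hC]; omega
            · simp only []
              rw [hτm]
              simp [hC]
              omega
        · exact absurd hmeq2 hmp
        · -- p < m : consider (q, m)
          by_cases hqmσ : (q, m) ∈ finInv σ
          · exfalso
            obtain ⟨-, h2⟩ := mem_finInv.mp hqmσ
            have : (p, m) ∈ finInv σ := mem_finInv.mpr ⟨hmgt2, lt_trans h2 hσqp⟩
            obtain ⟨-, h3⟩ := mem_finInv.mp (hsub this)
            rw [hτm, Fin.lt_def] at h3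
            simp [hC] at h3
          · apply ih (q, m) (mem_finInv.mpr ⟨lt_trans hqp hmgt2, ?_⟩) hqmσ ?_
            · rw [hτm, Fin.lt_def]; simp [hC]; omega
            · simp only []
              rw [hτm]
              simp [hC]
              omega

lemma leftWeakLe_of_finInv_subset' :
    ∀ (L : ℕ) (σ τ : Perm (Fin n)), len τ ≤ L → finInv σ ⊆ finInv τ → leftWeakLe σ τ := by
  intro L
  induction L with
  | zero =>
    intro σ τ hlen hsub
    have hτ : finInv τ = ∅ := Finset.card_eq_zero.mp (Nat.le_zero.mp hlen)
    have hσ : finInv σ = ∅ := Finset.subset_empty.mp (hτ ▸ hsub)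
    have : σ = τ := by
      rw [perm_eq_one_of_finInv_empty hσ, perm_eq_one_of_finInv_empty hτ]
    rw [this]
    exact Relation.ReflTransGen.refl
  | succ L ih =>
    intro σ τ hlen hsub
    by_cases heq : σ = τ
    · rw [heq]; exact Relation.ReflTransGen.refl
    · have hne : finInv σ ≠ finInv τ := fun hc => heq (perm_eq_of_finInv_eq hc)
      obtain ⟨x, hxτ, hxσ⟩ := Finset.exists_of_ssubset (ssubset_of_subset_of_ne hsub hne)
      obtain ⟨y, hyτ, hyσ, hyadj⟩ := adj_value_pair hsub ((τ x.1 : ℕ) - (τ x.2 : ℕ))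
        x hxτ hxσ (le_refl _)
      set A : Fin n := τ y.2 with hA
      set B : Fin n := τ y.1 with hB
      have hAB : (A : ℕ) + 1 = (B : ℕ) := hyadj.symm
      set τ' := Equiv.swap A B * τ with hτ'
      have hinvA : τ⁻¹ A = y.2 := Equiv.Perm.inv_apply_self τ y.2
      have hinvB : τ⁻¹ B = y.1 := Equiv.Perm.inv_apply_self τ y.1
      have hlt : τ⁻¹ B < τ⁻¹ A := by
        rw [hinvA, hinvB]; exact (mem_finInv.mp hyτ).1
      obtain ⟨hins, hnm⟩ := finInv_swap_mul' hAB τ hlt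
      rw [hinvA, hinvB] at hins hnm
      have hlen2 : len τ = len τ' + 1 := by
        have := len_swap_mul_gt hAB τ hlt
        rw [← hτ'] at this
        exact this
      have hsub' : finInv σ ⊆ finInv τ' := by
        intro z hz
        have hz2 := hsub hz
        rw [hins] at hz2
        rcases Finset.mem_insert.mp hz2 with hz3 | hz3
        · exfalso
          rw [hz3] at hz
          have : y ∈ finInv σ := by
            have : ((y.1, y.2) : Fin n × Fin n) = y := rfl
            rw [← this]; exact hz
          exact hyσ this
        · exact hz3
      have hrec : leftWeakLe σ τ' := ih σ τ' (by omega) hsub'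
      have hBlt : (A : ℕ) + 1 < n := by have := B.isLt; omega
      have hswap_eq : Equiv.swap (⟨(A : ℕ), Nat.lt_of_succ_lt hBlt⟩ : Fin n) ⟨(A : ℕ) + 1, hBlt⟩
          = Equiv.swap A B := by
        congr 1
        all_goals first | exact Fin.ext rfl | exact Fin.ext hAB
      have hcov : leftCov τ' τ := by
        refine ⟨(A : ℕ), hBlt, ?_, by omega⟩
        show τ = Equiv.swap (⟨(A : ℕ), Nat.lt_of_succ_lt hBlt⟩ : Fin n) ⟨(A : ℕ) + 1, hBlt⟩ * τ'
        rw [hswap_eq, hτ', swap_mul_cancel A B τ]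
      exact Relation.ReflTransGen.tail hrec hcov

lemma leftWeakLe_iff_finInv_subset {σ τ : Perm (Fin n)} :
    leftWeakLe σ τ ↔ finInv σ ⊆ finInv τ :=
  ⟨leftWeakLe_finInv_subset,
   fun h => leftWeakLe_of_finInv_subset' (len τ) σ τ (le_refl _) h⟩

/-! ### Step functions: `p ↦ 1 + #{z ∈ F : z ≤ p}` -/

lemma stepf_mono (F : Finset ℕ) {p q : ℕ} (h : p ≤ q) :
    (F.filter fun z => z < p + 1).card ≤ (F.filter fun z => z < q + 1).card := by
  apply Finset.card_le_card
  intro z hz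
  rw [Finset.mem_filter] at hz ⊢
  exact ⟨hz.1, by omega⟩

lemma stepf_lt_iff (F : Finset ℕ) {p q : ℕ} (h : p ≤ q) :
    (F.filter fun z => z < p + 1).card < (F.filter fun z => z < q + 1).card
      ↔ ∃ k ∈ F, p < k ∧ k ≤ q := by
  constructor
  · intro hlt
    by_contra hc
    push_neg at hc
    have hsub : (F.filter fun z => z < q + 1) ⊆ (F.filter fun z => z < p + 1) := by
      intro z hz
      rw [Finset.mem_filter] at hz ⊢
      refine ⟨hz.1, ?_⟩
      rcases Nat.lt_or_ge z (p + 1) with h2 | h2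
      · exact h2
      · exact absurd (hc z hz.1 (by omega)) (by omega)
    exact absurd (Finset.card_le_card hsub) (by omega)
  · rintro ⟨k, hkF, hk1, hk2⟩
    apply Finset.card_lt_card
    constructor
    · intro z hz
      rw [Finset.mem_filter] at hz ⊢
      exact ⟨hz.1, by omega⟩
    · intro hsub
      have : k ∈ F.filter fun z => z < p + 1 := hsub (by rw [Finset.mem_filter]; exact ⟨hkF, by omega⟩)
      rw [Finset.mem_filter] at this
      omega

lemma stepf_step (F : Finset ℕ) (p : ℕ) :
    (F.filter fun z => z < p + 1 + 1).card ≤ (F.filter fun z => z < p + 1).card + 1 := by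
  have hsub : (F.filter fun z => z < p + 1 + 1) ⊆ insert (p + 1) (F.filter fun z => z < p + 1) := by
    intro z hz
    rw [Finset.mem_filter] at hz
    rw [Finset.mem_insert, Finset.mem_filter]
    rcases Nat.lt_or_ge z (p + 1) with h2 | h2
    · exact Or.inr ⟨hz.1, h2⟩
    · exact Or.inl (by omega)
  calc (F.filter fun z => z < p + 1 + 1).card
      ≤ (insert (p + 1) (F.filter fun z => z < p + 1)).card := Finset.card_le_card hsub
    _ ≤ (F.filter fun z => z < p + 1).card + 1 := Finset.card_insert_le _ _

/-! ### Characterization of `DesL` -/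

lemma len_swap_mul_lt_iff {A B : Fin n} (hAB : (A : ℕ) + 1 = (B : ℕ)) (ρ : Perm (Fin n)) :
    len (Equiv.swap A B * ρ) < len ρ ↔ ρ⁻¹ B < ρ⁻¹ A := by
  rcases lt_trichotomy (ρ⁻¹ A) (ρ⁻¹ B) with hlt | heq | hgt
  · rw [len_swap_mul_lt hAB ρ hlt]
    constructor
    · omega
    · intro h; exact absurd (lt_trans hlt h) (lt_irrefl _)
  · exfalso
    have : A = B := by have := congrArg ρ heq; simpa using this
    rw [Fin.ext_iff] at this
    omega
  · rw [len_swap_mul_gt hAB ρ hgt]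
    constructor
    · intro _; exact hgt
    · intro _; omega

lemma mem_DesL {ρ : Perm (Fin n)} {k : ℕ} :
    k ∈ DesL ρ ↔ ∃ (hk : k < n), 0 < k ∧ ρ⁻¹ ⟨k, hk⟩ < ρ⁻¹ ⟨k - 1, by omega⟩ := by
  have mem_cfilter : ∀ {β : Type} {p : β → Prop} {s : Finset β} {x : β},
      x ∈ cfilter p s ↔ x ∈ s ∧ p x := fun {β p s x} =>
    @Finset.mem_filter β p (fun _ => Classical.propDecidable _) s x
  unfold DesL
  rw [mem_cfilter, Finset.mem_Ioo]
  constructor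
  · rintro ⟨⟨hk0, hkn⟩, h', hk, hlen⟩
    refine ⟨hk, hk0, ?_⟩
    have hAB : ((⟨k - 1, h'⟩ : Fin n) : ℕ) + 1 = ((⟨k, hk⟩ : Fin n) : ℕ) := by simp; omega
    have := (len_swap_mul_lt_iff hAB ρ).mp hlen
    exact this
  · rintro ⟨hk, hk0, hlt⟩
    have h' : k - 1 < n := by omega
    refine ⟨⟨hk0, hk⟩, h', hk, ?_⟩
    have hAB : ((⟨k - 1, h'⟩ : Fin n) : ℕ) + 1 = ((⟨k, hk⟩ : Fin n) : ℕ) := by simp; omega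
    exact (len_swap_mul_lt_iff hAB ρ).mpr hlt

lemma DesL_subset {ρ : Perm (Fin n)} : DesL ρ ⊆ Finset.Ioo 0 n := by
  intro k hk
  rw [mem_DesL] at hk
  obtain ⟨hk1, hk2, -⟩ := hk
  rw [Finset.mem_Ioo]
  omega

/-! ### Discrete intermediate value helper -/

lemma ivt (g : ℕ → ℕ) (hstep : ∀ a, g (a + 1) ≤ g a + 1)
    (hmono : ∀ a b, a ≤ b → g a ≤ g b) :
    ∀ (N m : ℕ), g 0 ≤ m → m ≤ g N → ∃ v ≤ N, g v = m := by
  intro N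
  induction N with
  | zero => intro m h1 h2; exact ⟨0, le_refl _, by omega⟩
  | succ N ih =>
    intro m h1 h2
    rcases Nat.lt_or_ge (g N) m with h3 | h3
    · have := hstep N
      exact ⟨N + 1, le_refl _, by omega⟩
    · obtain ⟨v, hv1, hv2⟩ := ih m h1 h3
      exact ⟨v, by omega, hv2⟩

/-! ### Uniqueness of enumerations -/

lemma enum_inj {Rel : ℕ × ℕ → ℕ × ℕ → Prop} (hasym : ∀ x y, Rel x y → Rel y x → False)
    {r : Fin n → ℕ × ℕ} (hr : ∀ i j, i < j ↔ Rel (r i) (r j)) :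
    Function.Injective r := by
  intro i j hij
  by_contra hne
  rcases lt_trichotomy i j with h | h | h
  · have h1 := (hr i j).mp h
    rw [hij] at h1
    exact hasym _ _ h1 h1
  · exact hne h
  · have h1 := (hr j i).mp h
    rw [hij] at h1
    exact hasym _ _ h1 h1

lemma enum_ext {Rel : ℕ × ℕ → ℕ × ℕ → Prop} (hasym : ∀ x y, Rel x y → Rel y x → False)
    {r s : Fin n → ℕ × ℕ}
    (hr : ∀ i j, i < j ↔ Rel (r i) (r j)) (hs : ∀ i j, i < j ↔ Rel (s i) (s j))
    (hrange : Set.range r = Set.range s) : ∀ i, r i = s i := by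
  have hex : ∀ i, ∃ j, s j = r i := by
    intro i
    have : r i ∈ Set.range s := hrange ▸ Set.mem_range_self i
    exact this
  choose φ hφ using hex
  have hrinj := enum_inj hasym hr
  have hmono : StrictMono φ := by
    intro i j hij
    have h1 := (hr i j).mp hij
    rw [← hφ i, ← hφ j] at h1
    rcases lt_trichotomy (φ i) (φ j) with h | h | h
    · exact h
    · exfalso
      rw [h] at h1
      exact hasym _ _ h1 h1
    · exfalso
      exact hasym _ _ h1 ((hs (φ j) (φ i)).mp h)
  intro i
  rw [← hφ i, strictMono_fin_id hmono i]

lemma enum_of_forward {Rel : ℕ × ℕ → ℕ × ℕ → Prop}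
    (hasym : ∀ x y, Rel x y → Rel y x → False)
    {g : Fin n → ℕ × ℕ} (hfwd : ∀ i j, i < j → Rel (g i) (g j)) :
    ∀ i j, i < j ↔ Rel (g i) (g j) := by
  intro i j
  refine ⟨hfwd i j, ?_⟩
  intro hR
  rcases lt_trichotomy i j with h | h | h
  · exact h
  · exfalso; rw [h] at hR; exact hasym _ _ hR hR
  · exact absurd hR (fun hR2 => hasym _ _ hR2 (hfwd j i h))

/-! ### The row and column functions of the algorithm's diagram -/

noncomputable def colB {n : ℕ} (ρ : Perm (Fin n)) (v : ℕ) : ℕ :=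
  1 + ((DesL ρ).filter fun k => k < v + 1).card

def rowB (n : ℕ) (S : Finset ℕ) (p : ℕ) : ℕ :=
  1 + (((Finset.Icc 1 (n - 1)) \ S).filter fun z => z < p + 1).card

noncomputable def boxOf {n : ℕ} (S : Finset ℕ) (ρ : Perm (Fin n)) (p : Fin n) : ℕ × ℕ :=
  (colB ρ ((ρ p : Fin n) : ℕ), rowB n S ((p : Fin n) : ℕ))

lemma Dalg_eq (S : Finset ℕ) (ρ : Perm (Fin n)) :
    Dalg S ρ = Finset.image (boxOf S ρ) Finset.univ := rfl

lemma colB_mono (ρ : Perm (Fin n)) {v w : ℕ} (h : v ≤ w) : colB ρ v ≤ colB ρ w := by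
  unfold colB
  have := stepf_mono (DesL ρ) h
  omega

lemma colB_lt_iff (ρ : Perm (Fin n)) {v w : ℕ} (h : v ≤ w) :
    colB ρ v < colB ρ w ↔ ∃ k ∈ DesL ρ, v < k ∧ k ≤ w := by
  unfold colB
  rw [← stepf_lt_iff (DesL ρ) h]
  omega

lemma colB_lt_of_inv_gt (ρ : Perm (Fin n)) {v w : Fin n} (hvw : v < w)
    (hinv : ρ⁻¹ w < ρ⁻¹ v) : colB ρ (v : ℕ) < colB ρ (w : ℕ) := by
  obtain ⟨r, h1, hr1, hr2, hr3⟩ := exists_adjacent_desc ρ⁻¹ hvw hinv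
  rw [colB_lt_iff ρ (le_of_lt hvw)]
  refine ⟨r + 1, ?_, by omega, by omega⟩
  rw [mem_DesL]
  exact ⟨h1, by omega, hr3⟩

lemma colB_inv_lt (ρ : Perm (Fin n)) {v w : Fin n} (hvw : v < w)
    (hcol : colB ρ (v : ℕ) = colB ρ (w : ℕ)) : ρ⁻¹ v < ρ⁻¹ w := by
  rcases lt_trichotomy (ρ⁻¹ v) (ρ⁻¹ w) with h | h | h
  · exact h
  · exfalso
    have : v = w := by have := congrArg ρ h; simpa using this
    rw [this] at hvw
    exact lt_irrefl _ hvw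
  · exact absurd (colB_lt_of_inv_gt ρ hvw h) (by omega)

lemma rowB_mono (S : Finset ℕ) {p q : ℕ} (h : p ≤ q) : rowB n S p ≤ rowB n S q := by
  unfold rowB
  have := stepf_mono ((Finset.Icc 1 (n - 1)) \ S) h
  omega

lemma rowB_lt_iff (S : Finset ℕ) {p q : ℕ} (h : p ≤ q) :
    rowB n S p < rowB n S q ↔ ∃ z ∈ (Finset.Icc 1 (n - 1)) \ S, p < z ∧ z ≤ q := by
  unfold rowB
  rw [← stepf_lt_iff ((Finset.Icc 1 (n - 1)) \ S) h]
  omega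

lemma rowB_eq_S (S : Finset ℕ) {p q : Fin n} (hpq : p < q)
    (hrow : rowB n S (p : ℕ) = rowB n S (q : ℕ)) :
    ∀ k, (p : ℕ) < k → k ≤ (q : ℕ) → k ∈ S := by
  intro k hk1 hk2
  by_contra hkS
  have hkZ : k ∈ (Finset.Icc 1 (n - 1)) \ S := by
    rw [Finset.mem_sdiff, Finset.mem_Icc]
    have := q.isLt
    exact ⟨⟨by omega, by omega⟩, hkS⟩
  have : rowB n S (p : ℕ) < rowB n S (q : ℕ) := by
    rw [rowB_lt_iff S (le_of_lt hpq)]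
    exact ⟨k, hkZ, hk1, hk2⟩
  omega

/-! ### Facts about `psums` and the parabolic subgroup -/

lemma list_length_le_sum : ∀ (l : List ℕ), (∀ x ∈ l, 0 < x) → l.length ≤ l.sum := by
  intro l h
  exact List.length_le_sum_of_one_le l h

lemma psums_bounds {α : List ℕ} (hα : ∀ x ∈ α, 0 < x) (hsum : α.sum = n) :
    ∀ i ∈ psums α, 0 < i ∧ i < n ∧ i ≤ n - 1 := by
  intro i hi
  unfold psums at hi
  rw [Finset.mem_image] at hi
  obtain ⟨j, hj, hij⟩ := hi
  rw [Finset.mem_range] at hj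
  have hlen : j + 1 < α.length := by omega
  have h1 : 0 < i := by
    have htake : (α.take (j + 1)).length = j + 1 := by
      rw [List.length_take]; omega
    have := list_length_le_sum (α.take (j + 1))
      (fun x hx => hα x (List.take_subset _ _ hx))
    omega
  have h2 : i ≤ n - 1 ∧ i < n := by
    have hsplit : (α.take (j + 1)).sum + (α.drop (j + 1)).sum = α.sum := by
      rw [← List.sum_append, List.take_append_drop]
    have hdroplen : 0 < (α.drop (j + 1)).length := by
      rw [List.length_drop]; omega
    have hdropsum := list_length_le_sum (α.drop (j + 1))
      (fun x hx => hα x (List.drop_subset _ _ hx))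
    omega
  exact ⟨h1, h2.2, h2.1⟩

lemma closure_row {S : Finset ℕ} (hS0 : ∀ i ∈ S, 0 < i) {σ : Perm (Fin n)}
    (hσ : σ ∈ Subgroup.closure (genSet n S)) :
    ∀ p : Fin n, rowB n S ((σ p : Fin n) : ℕ) = rowB n S ((p : Fin n) : ℕ) := by
  induction hσ using Subgroup.closure_induction with
  | mem g hg =>
    obtain ⟨i, hiS, hin, hgeq⟩ := hg
    have hi0 : 0 < i := hS0 i hiS
    have hcard : (((Finset.Icc 1 (n - 1)) \ S).filter fun z => z < (i - 1) + 1).card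
        = (((Finset.Icc 1 (n - 1)) \ S).filter fun z => z < i + 1).card := by
      congr 1
      ext z
      rw [Finset.mem_filter, Finset.mem_filter, Finset.mem_sdiff]
      constructor
      · rintro ⟨hz1, hz2⟩; exact ⟨hz1, by omega⟩
      · rintro ⟨hz1, hz2⟩
        refine ⟨hz1, ?_⟩
        have : z ≠ i := fun hc => hz1.2 (hc ▸ hiS)
        omega
    intro p
    subst hgeq
    by_cases hpA : p = (⟨i - 1, by omega⟩ : Fin n)
    · rw [hpA, Equiv.swap_apply_left]
      show rowB n S i = rowB n S (i - 1)
      unfold rowB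
      omega
    · by_cases hpB : p = (⟨i, hin⟩ : Fin n)
      · rw [hpB, Equiv.swap_apply_right]
        show rowB n S (i - 1) = rowB n S i
        unfold rowB
        omega
      · rw [Equiv.swap_apply_of_ne_of_ne hpA hpB]
  | one => intro p; rfl
  | mul x y hx hy ihx ihy =>
    intro p
    have hmul : (x * y) p = x (y p) := rfl
    rw [hmul, ihx (y p), ihy p]
  | inv x hx ihx =>
    intro p
    have := ihx (x⁻¹ p)
    rw [Equiv.Perm.apply_inv_self] at this
    exact this.symm

lemma inv_sub_of_row_pres {S : Finset ℕ} {σ : Perm (Fin n)}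
    (hpres : ∀ p : Fin n, rowB n S ((σ p : Fin n) : ℕ) = rowB n S ((p : Fin n) : ℕ)) :
    ∀ x ∈ finInv σ, rowB n S ((x.1 : Fin n) : ℕ) = rowB n S ((x.2 : Fin n) : ℕ) := by
  intro x hx
  obtain ⟨h1, h2⟩ := mem_finInv.mp hx
  have ha : rowB n S (x.1 : ℕ) ≤ rowB n S (x.2 : ℕ) := rowB_mono S (le_of_lt h1)
  have hb : rowB n S ((σ x.2 : Fin n) : ℕ) ≤ rowB n S ((σ x.1 : Fin n) : ℕ) :=
    rowB_mono S (le_of_lt h2)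
  rw [hpres x.1, hpres x.2] at hb
  omega

/-- The inversion-set of the longest element of the parabolic subgroup:
all pairs lying in a common row block. -/
lemma w0_invW {S : Finset ℕ} (hS0 : ∀ i ∈ S, 0 < i) (hSn : ∀ i ∈ S, i < n)
    {w0 : Perm (Fin n)} (hw0 : IsLongest (genSet n S) w0) :
    finInv w0 = Finset.univ.filter fun x : Fin n × Fin n =>
      x.1 < x.2 ∧ rowB n S ((x.1 : Fin n) : ℕ) = rowB n S ((x.2 : Fin n) : ℕ) := by
  have hsub : finInv w0 ⊆ Finset.univ.filter fun x : Fin n × Fin n =>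
      x.1 < x.2 ∧ rowB n S ((x.1 : Fin n) : ℕ) = rowB n S ((x.2 : Fin n) : ℕ) := by
    intro x hx
    rw [Finset.mem_filter]
    exact ⟨Finset.mem_univ _,
      (mem_finInv.mp hx).1, inv_sub_of_row_pres (closure_row hS0 hw0.1) x hx⟩
  rcases eq_or_ne (finInv w0) (Finset.univ.filter fun x : Fin n × Fin n =>
      x.1 < x.2 ∧ rowB n S ((x.1 : Fin n) : ℕ) = rowB n S ((x.2 : Fin n) : ℕ)) with heq | hne
  · exact heq
  · exfalso
    have hss := ssubset_of_subset_of_ne hsub hne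
    obtain ⟨x, hxW, hxw0⟩ := Finset.exists_of_ssubset hss
    rw [Finset.mem_filter] at hxW
    obtain ⟨-, hpq, hrow⟩ := hxW
    set p := x.1
    set q := x.2
    have hasc : w0 p < w0 q := by
      rcases lt_trichotomy (w0 p) (w0 q) with h | h | h
      · exact h
      · exact absurd (w0.injective h) (ne_of_lt hpq)
      · exact absurd (mem_finInv.mpr ⟨hpq, h⟩) hxw0
    obtain ⟨r, h1, hr1, hr2, hr3⟩ := exists_adjacent_asc w0 hpq hasc
    have hrS : r + 1 ∈ S := rowB_eq_S S hpq hrow (r + 1) (by omega) (by omega)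
    set A : Fin n := ⟨r, by omega⟩ with hA
    set B : Fin n := ⟨r + 1, h1⟩ with hB
    have htgen : Equiv.swap A B ∈ genSet n S := by
      refine ⟨r + 1, hrS, h1, ?_⟩
      congr 1
    have htcl : Equiv.swap A B ∈ Subgroup.closure (genSet n S) :=
      Subgroup.subset_closure htgen
    have hmul : w0 * Equiv.swap A B ∈ Subgroup.closure (genSet n S) :=
      mul_mem hw0.1 htcl
    have hlen : len (w0 * Equiv.swap A B) = len w0 + 1 := by
      have hAB : (A : ℕ) + 1 = (B : ℕ) := rfl
      have hinv : (w0⁻¹)⁻¹ A < (w0⁻¹)⁻¹ B := by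
        simp only [inv_inv]
        exact hr3
      have h2 := len_swap_mul_lt hAB w0⁻¹ hinv
      have h3 : w0 * Equiv.swap A B = (Equiv.swap A B * w0⁻¹)⁻¹ := by
        rw [mul_inv_rev, inv_inv, Equiv.swap_inv]
      rw [h3, len_inv, h2, len_inv]
    have := hw0.2 _ hmul
    omega

lemma w0_invol {S : Finset ℕ} (hS0 : ∀ i ∈ S, 0 < i) (hSn : ∀ i ∈ S, i < n)
    {w0 : Perm (Fin n)} (hw0 : IsLongest (genSet n S) w0) : w0⁻¹ = w0 := by
  have hW := w0_invW hS0 hSn hw0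
  have hpres := closure_row hS0 (inv_mem hw0.1 : w0⁻¹ ∈ Subgroup.closure (genSet n S))
  have hsub : finInv w0⁻¹ ⊆ finInv w0 := by
    rw [hW]
    intro x hx
    rw [Finset.mem_filter]
    exact ⟨Finset.mem_univ _, (mem_finInv.mp hx).1, inv_sub_of_row_pres hpres x hx⟩
  have hcard : (finInv w0).card ≤ (finInv w0⁻¹).card := by
    rw [← len_eq, ← len_eq, len_inv]
  exact perm_eq_of_finInv_eq (Finset.eq_of_subset_of_card_le hsub hcard)


lemma boxOf_fst (S : Finset ℕ) (ρ : Perm (Fin n)) (p : Fin n) :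
    (boxOf S ρ p).1 = colB ρ ((ρ p : Fin n) : ℕ) := rfl

lemma boxOf_snd (S : Finset ℕ) (ρ : Perm (Fin n)) (p : Fin n) :
    (boxOf S ρ p).2 = rowB n S ((p : Fin n) : ℕ) := rfl

end AlgPf

open AlgPf

/-- Let `α ⊨ n` and `ρ ∈ S_n` with `w₀(α) ≤_L ρ`.  Then the diagram
`D = D_{α;ρ}` produced by the algorithm has `n` boxes and lies in `𝔇_n`, the
reading word of its source tableau is `w₀(α)`, the reading word of its sink
tableau is `ρ`, and consequently
`Σ_R(P_D) = { w₀ γ⁻¹ : γ ∈ [w₀(α), ρ]_L }`. -/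
theorem algorithm_diagram_spec {n : ℕ} (α : List ℕ)
    (hα : ∀ x ∈ α, 0 < x) (hsum : α.sum = n)
    (ρ w0α : Perm (Fin n))
    (hw0α : IsLongest (genSet n (psums α)) w0α)
    (hle : leftWeakLe w0α ρ)
    (e u t r : Fin n → ℕ × ℕ)
    (he : RowEnum e) (hre : Set.range e = ↑(Dalg (psums α) ρ))
    (hu : SrcEnum u) (hru : Set.range u = ↑(Dalg (psums α) ρ))
    (ht : ColEnum t) (hrt : Set.range t = ↑(Dalg (psums α) ρ))
    (hr : ReadEnum r) (hrr : Set.range r = ↑(Dalg (psums α) ρ))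
    (wsrc : Perm (Fin n)) (hwsrc : ∀ p : Fin n, u (wsrc p) = r p)
    (wsink : Perm (Fin n)) (hwsink : ∀ p : Fin n, t (wsink p) = r p) :
    (Dalg (psums α) ρ).card = n ∧ DiagOK (Dalg (psums α) ρ) ∧
    wsrc = w0α ∧ wsink = ρ ∧
    SigmaRD e = (fun γ => Fin.revPerm * γ⁻¹) '' leftInterval w0α ρ := by
  classical
  set Sf := psums α with hSf
  have hSb := AlgPf.psums_bounds hα hsum
  have hS0 : ∀ i ∈ Sf, 0 < i := fun i hi => (hSb i hi).1
  have hSn : ∀ i ∈ Sf, i < n := fun i hi => (hSb i hi).2.1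
  have hInvW := AlgPf.w0_invW hS0 hSn hw0α
  have hinvol := AlgPf.w0_invol hS0 hSn hw0α
  have hww : ∀ p : Fin n, w0α (w0α p) = p := by
    intro p
    have h := Equiv.Perm.inv_apply_self w0α p
    rwa [hinvol] at h
  have hWρ : ∀ {p q : Fin n}, p < q →
      rowB n Sf ((p : Fin n) : ℕ) = rowB n Sf ((q : Fin n) : ℕ) → (p, q) ∈ AlgPf.finInv ρ := by
    intro p q hpq hrow
    apply AlgPf.leftWeakLe_finInv_subset hle
    rw [hInvW, Finset.mem_filter]
    exact ⟨Finset.mem_univ _, hpq, hrow⟩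
  have F1 : ∀ {p q : Fin n}, p < q →
      rowB n Sf ((p : Fin n) : ℕ) = rowB n Sf ((q : Fin n) : ℕ) → ρ q < ρ p := by
    intro p q hpq hrow
    exact (AlgPf.mem_finInv.mp (hWρ hpq hrow)).2
  have F2 : ∀ {p q : Fin n}, p < q →
      rowB n Sf ((p : Fin n) : ℕ) = rowB n Sf ((q : Fin n) : ℕ) →
      colB ρ ((ρ q : Fin n) : ℕ) < colB ρ ((ρ p : Fin n) : ℕ) := by
    intro p q hpq hrow
    apply AlgPf.colB_lt_of_inv_gt ρ (F1 hpq hrow)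
    simp only [Equiv.Perm.inv_apply_self]
    exact hpq
  have hBinj : Function.Injective (boxOf Sf ρ) := by
    intro p q hpq2
    have hcol : colB ρ ((ρ p : Fin n) : ℕ) = colB ρ ((ρ q : Fin n) : ℕ) :=
      congrArg Prod.fst hpq2
    have hrow : rowB n Sf ((p : Fin n) : ℕ) = rowB n Sf ((q : Fin n) : ℕ) :=
      congrArg Prod.snd hpq2
    rcases lt_trichotomy p q with h | h | h
    · exact absurd (F2 h hrow) (by omega)
    · exact h
    · exact absurd (F2 h hrow.symm) (by omega)
  have hrangeB : Set.range (boxOf Sf ρ) = ↑(Dalg Sf ρ) := by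
    rw [Dalg_eq, Finset.coe_image, Finset.coe_univ, Set.image_univ]
  -- the four reading orders
  have asymRow : ∀ x y : ℕ × ℕ,
      (y.2 < x.2 ∨ (x.2 = y.2 ∧ x.1 < y.1)) → (x.2 < y.2 ∨ (y.2 = x.2 ∧ y.1 < x.1)) → False := by
    intro x y h1 h2
    rcases h1 with h1 | ⟨h1a, h1b⟩ <;> rcases h2 with h2 | ⟨h2a, h2b⟩ <;> omega
  have asymSrc : ∀ x y : ℕ × ℕ,
      (x.2 < y.2 ∨ (x.2 = y.2 ∧ x.1 < y.1)) → (y.2 < x.2 ∨ (y.2 = x.2 ∧ y.1 < x.1)) → False := by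
    intro x y h1 h2
    rcases h1 with h1 | ⟨h1a, h1b⟩ <;> rcases h2 with h2 | ⟨h2a, h2b⟩ <;> omega
  have asymCol : ∀ x y : ℕ × ℕ,
      (x.1 < y.1 ∨ (x.1 = y.1 ∧ x.2 < y.2)) → (y.1 < x.1 ∨ (y.1 = x.1 ∧ y.2 < x.2)) → False := by
    intro x y h1 h2
    rcases h1 with h1 | ⟨h1a, h1b⟩ <;> rcases h2 with h2 | ⟨h2a, h2b⟩ <;> omega
  have asymRead : ∀ x y : ℕ × ℕ,
      (x.2 < y.2 ∨ (x.2 = y.2 ∧ y.1 < x.1)) → (y.2 < x.2 ∨ (y.2 = x.2 ∧ x.1 < y.1)) → False := by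
    intro x y h1 h2
    rcases h1 with h1 | ⟨h1a, h1b⟩ <;> rcases h2 with h2 | ⟨h2a, h2b⟩ <;> omega
  -- the reading enumeration is `boxOf` itself
  have hrfwd : ∀ i j : Fin n, i < j →
      ((boxOf Sf ρ i).2 < (boxOf Sf ρ j).2 ∨
        ((boxOf Sf ρ i).2 = (boxOf Sf ρ j).2 ∧ (boxOf Sf ρ j).1 < (boxOf Sf ρ i).1)) := by
    intro i j hij
    rw [boxOf_snd, boxOf_snd, boxOf_fst, boxOf_fst]
    have hmono : rowB n Sf ((i : Fin n) : ℕ) ≤ rowB n Sf ((j : Fin n) : ℕ) :=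
      AlgPf.rowB_mono Sf (le_of_lt hij)
    rcases Nat.lt_or_ge (rowB n Sf ((i : Fin n) : ℕ)) (rowB n Sf ((j : Fin n) : ℕ)) with h | h
    · exact Or.inl h
    · have heq : rowB n Sf ((i : Fin n) : ℕ) = rowB n Sf ((j : Fin n) : ℕ) := by omega
      exact Or.inr ⟨heq, F2 hij heq⟩
  have hr2 : ∀ i, r i = boxOf Sf ρ i :=
    AlgPf.enum_ext asymRead hr (AlgPf.enum_of_forward asymRead hrfwd) (hrr.trans hrangeB.symm)
  -- the row-reading enumeration is `boxOf ∘ rev`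
  have hefwd : ∀ i j : Fin n, i < j →
      ((boxOf Sf ρ (Fin.rev j)).2 < (boxOf Sf ρ (Fin.rev i)).2 ∨
        ((boxOf Sf ρ (Fin.rev i)).2 = (boxOf Sf ρ (Fin.rev j)).2 ∧
          (boxOf Sf ρ (Fin.rev i)).1 < (boxOf Sf ρ (Fin.rev j)).1)) := by
    intro i j hij
    rw [boxOf_snd, boxOf_snd, boxOf_fst, boxOf_fst]
    have hrev : Fin.rev j < Fin.rev i := Fin.rev_lt_rev.mpr hij
    have hmono : rowB n Sf ((Fin.rev j : Fin n) : ℕ) ≤ rowB n Sf ((Fin.rev i : Fin n) : ℕ) :=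
      AlgPf.rowB_mono Sf (le_of_lt hrev)
    rcases Nat.lt_or_ge (rowB n Sf ((Fin.rev j : Fin n) : ℕ))
        (rowB n Sf ((Fin.rev i : Fin n) : ℕ)) with h | h
    · exact Or.inl h
    · have heq : rowB n Sf ((Fin.rev j : Fin n) : ℕ) = rowB n Sf ((Fin.rev i : Fin n) : ℕ) := by
        omega
      exact Or.inr ⟨heq.symm, F2 hrev heq⟩
  have hrangeE : Set.range (fun i : Fin n => boxOf Sf ρ (Fin.rev i)) = ↑(Dalg Sf ρ) := by
    rw [← hrangeB]
    ext y
    constructor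
    · rintro ⟨i, hi⟩; exact ⟨Fin.rev i, hi⟩
    · rintro ⟨p, hp⟩; exact ⟨Fin.rev p, by simpa [Fin.rev_rev] using hp⟩
  have he2 : ∀ i, e i = boxOf Sf ρ (Fin.rev i) :=
    AlgPf.enum_ext asymRow he (AlgPf.enum_of_forward asymRow hefwd) (hre.trans hrangeE.symm)
  -- the sink (column) enumeration is `boxOf ∘ ρ⁻¹`
  have htfwd : ∀ i j : Fin n, i < j →
      ((boxOf Sf ρ (ρ⁻¹ i)).1 < (boxOf Sf ρ (ρ⁻¹ j)).1 ∨
        ((boxOf Sf ρ (ρ⁻¹ i)).1 = (boxOf Sf ρ (ρ⁻¹ j)).1 ∧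
          (boxOf Sf ρ (ρ⁻¹ i)).2 < (boxOf Sf ρ (ρ⁻¹ j)).2)) := by
    intro i j hij
    rw [boxOf_snd, boxOf_snd, boxOf_fst, boxOf_fst]
    rw [Equiv.Perm.apply_inv_self, Equiv.Perm.apply_inv_self]
    have hmono : colB ρ ((i : Fin n) : ℕ) ≤ colB ρ ((j : Fin n) : ℕ) :=
      AlgPf.colB_mono ρ (le_of_lt hij)
    rcases Nat.lt_or_ge (colB ρ ((i : Fin n) : ℕ)) (colB ρ ((j : Fin n) : ℕ)) with h | h
    · exact Or.inl h
    · have heq : colB ρ ((i : Fin n) : ℕ) = colB ρ ((j : Fin n) : ℕ) := by omega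
      refine Or.inr ⟨heq, ?_⟩
      have hinv : ρ⁻¹ i < ρ⁻¹ j := AlgPf.colB_inv_lt ρ hij heq
      have hrmono : rowB n Sf ((ρ⁻¹ i : Fin n) : ℕ) ≤ rowB n Sf ((ρ⁻¹ j : Fin n) : ℕ) :=
        AlgPf.rowB_mono Sf (le_of_lt hinv)
      rcases Nat.lt_or_ge (rowB n Sf ((ρ⁻¹ i : Fin n) : ℕ))
          (rowB n Sf ((ρ⁻¹ j : Fin n) : ℕ)) with h2 | h2
      · exact h2
      · exfalso
        have heq2 : rowB n Sf ((ρ⁻¹ i : Fin n) : ℕ) = rowB n Sf ((ρ⁻¹ j : Fin n) : ℕ) := by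
          omega
        have := F1 hinv heq2
        rw [Equiv.Perm.apply_inv_self, Equiv.Perm.apply_inv_self] at this
        exact absurd (lt_trans hij this) (lt_irrefl _)
  have hrangeT : Set.range (fun i : Fin n => boxOf Sf ρ (ρ⁻¹ i)) = ↑(Dalg Sf ρ) := by
    rw [← hrangeB]
    ext y
    constructor
    · rintro ⟨i, hi⟩; exact ⟨ρ⁻¹ i, hi⟩
    · rintro ⟨p, hp⟩
      exact ⟨ρ p, by simpa [Equiv.Perm.inv_apply_self] using hp⟩
  have ht2 : ∀ i, t i = boxOf Sf ρ (ρ⁻¹ i) :=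
    AlgPf.enum_ext asymCol ht (AlgPf.enum_of_forward asymCol htfwd) (hrt.trans hrangeT.symm)
  -- the source enumeration is `boxOf ∘ w0α`
  have hpres : ∀ p : Fin n, rowB n Sf ((w0α p : Fin n) : ℕ) = rowB n Sf ((p : Fin n) : ℕ) :=
    AlgPf.closure_row hS0 hw0α.1
  have hufwd : ∀ i j : Fin n, i < j →
      ((boxOf Sf ρ (w0α i)).2 < (boxOf Sf ρ (w0α j)).2 ∨
        ((boxOf Sf ρ (w0α i)).2 = (boxOf Sf ρ (w0α j)).2 ∧
          (boxOf Sf ρ (w0α i)).1 < (boxOf Sf ρ (w0α j)).1)) := by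
    intro i j hij
    rw [boxOf_snd, boxOf_snd, boxOf_fst, boxOf_fst, hpres i, hpres j]
    have hmono : rowB n Sf ((i : Fin n) : ℕ) ≤ rowB n Sf ((j : Fin n) : ℕ) :=
      AlgPf.rowB_mono Sf (le_of_lt hij)
    rcases Nat.lt_or_ge (rowB n Sf ((i : Fin n) : ℕ)) (rowB n Sf ((j : Fin n) : ℕ)) with h | h
    · exact Or.inl h
    · have heq : rowB n Sf ((i : Fin n) : ℕ) = rowB n Sf ((j : Fin n) : ℕ) := by omega
      refine Or.inr ⟨heq, ?_⟩
      have hinvw : (i, j) ∈ AlgPf.finInv w0α := by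
        rw [hInvW, Finset.mem_filter]
        exact ⟨Finset.mem_univ _, hij, heq⟩
      have hdesc : w0α j < w0α i := (AlgPf.mem_finInv.mp hinvw).2
      have hroweq : rowB n Sf ((w0α j : Fin n) : ℕ) = rowB n Sf ((w0α i : Fin n) : ℕ) := by
        rw [hpres i, hpres j, heq]
      exact F2 hdesc hroweq
  have hrangeU : Set.range (fun i : Fin n => boxOf Sf ρ (w0α i)) = ↑(Dalg Sf ρ) := by
    rw [← hrangeB]
    ext y
    constructor
    · rintro ⟨i, hi⟩; exact ⟨w0α i, hi⟩
    · rintro ⟨p, hp⟩; exact ⟨w0α p, by simpa [hww] using hp⟩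
  have hu2 : ∀ i, u i = boxOf Sf ρ (w0α i) :=
    AlgPf.enum_ext asymSrc hu (AlgPf.enum_of_forward asymSrc hufwd) (hru.trans hrangeU.symm)
  -- assemble the five conclusions
  refine ⟨?_, ?_, ?_, ?_, ?_⟩
  · -- cardinality
    rw [Dalg_eq, Finset.card_image_of_injective _ hBinj, Finset.card_univ, Fintype.card_fin]
  · -- DiagOK
    rcases Nat.eq_zero_or_pos n with hn | hn
    · have hD : Dalg Sf ρ = ∅ := by
        rw [Dalg_eq]
        subst hn
        simp
      rw [hD]
      refine ⟨⟨0, ?_⟩, ⟨0, ?_⟩⟩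
      · rw [Finset.image_empty]
        exact (Finset.Icc_eq_empty (by omega)).symm
      · rw [Finset.image_empty]
        exact (Finset.Icc_eq_empty (by omega)).symm
    · have hZb : ∀ z ∈ (Finset.Icc 1 (n - 1)) \ Sf, 1 ≤ z ∧ z ≤ n - 1 := by
        intro z hz
        rw [Finset.mem_sdiff, Finset.mem_Icc] at hz
        exact hz.1
      have hDb : ∀ k ∈ DesL ρ, 0 < k ∧ k < n := by
        intro k hk
        have := AlgPf.DesL_subset hk
        rwa [Finset.mem_Ioo] at this
      constructor
      · refine ⟨1 + (DesL ρ).card, ?_⟩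
        rw [Dalg_eq, Finset.image_image]
        ext m
        rw [Finset.mem_image, Finset.mem_Icc]
        constructor
        · rintro ⟨p, -, hp⟩
          have hp' : colB ρ ((ρ p : Fin n) : ℕ) = m := hp
          have h1 : 1 ≤ colB ρ ((ρ p : Fin n) : ℕ) := by unfold colB; omega
          have h2 : colB ρ ((ρ p : Fin n) : ℕ) ≤ 1 + (DesL ρ).card := by
            unfold colB
            have := Finset.card_filter_le (DesL ρ) (fun k => k < ((ρ p : Fin n) : ℕ) + 1)
            omega
          omega
        · rintro ⟨hm1, hm2⟩
          have hg0 : colB ρ 0 = 1 := by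
            unfold colB
            have : (DesL ρ).filter (fun k => k < 0 + 1) = ∅ := by
              rw [Finset.filter_eq_empty_iff]
              intro k hk
              have := hDb k hk
              omega
            rw [this]
            simp
          have hgN : colB ρ (n - 1) = 1 + (DesL ρ).card := by
            unfold colB
            have : (DesL ρ).filter (fun k => k < (n - 1) + 1) = DesL ρ := by
              rw [Finset.filter_eq_self]
              intro k hk
              have := hDb k hk
              omega
            rw [this]
          have hstep : ∀ a, colB ρ (a + 1) ≤ colB ρ a + 1 := by
            intro a
            unfold colB
            have := AlgPf.stepf_step (DesL ρ) a
            omega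
          obtain ⟨v, hv1, hv2⟩ := AlgPf.ivt (fun v => colB ρ v) hstep
            (fun a b hab => AlgPf.colB_mono ρ hab) (n - 1) m
            (by show colB ρ 0 ≤ m; omega) (by show m ≤ colB ρ (n - 1); omega)
          refine ⟨ρ⁻¹ ⟨v, by omega⟩, Finset.mem_univ _, ?_⟩
          show colB ρ ((ρ (ρ⁻¹ (⟨v, by omega⟩ : Fin n)) : Fin n) : ℕ) = m
          rw [Equiv.Perm.apply_inv_self]
          exact hv2
      · refine ⟨1 + ((Finset.Icc 1 (n - 1)) \ Sf).card, ?_⟩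
        rw [Dalg_eq, Finset.image_image]
        ext m
        rw [Finset.mem_image, Finset.mem_Icc]
        constructor
        · rintro ⟨p, -, hp⟩
          have hp' : rowB n Sf ((p : Fin n) : ℕ) = m := hp
          have h1 : 1 ≤ rowB n Sf ((p : Fin n) : ℕ) := by unfold rowB; omega
          have h2 : rowB n Sf ((p : Fin n) : ℕ) ≤ 1 + ((Finset.Icc 1 (n - 1)) \ Sf).card := by
            unfold rowB
            have := Finset.card_filter_le ((Finset.Icc 1 (n - 1)) \ Sf)
              (fun z => z < ((p : Fin n) : ℕ) + 1)
            omega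
          omega
        · rintro ⟨hm1, hm2⟩
          have hg0 : rowB n Sf 0 = 1 := by
            unfold rowB
            have : ((Finset.Icc 1 (n - 1)) \ Sf).filter (fun z => z < 0 + 1) = ∅ := by
              rw [Finset.filter_eq_empty_iff]
              intro z hz
              have := hZb z hz
              omega
            rw [this]
            simp
          have hgN : rowB n Sf (n - 1) = 1 + ((Finset.Icc 1 (n - 1)) \ Sf).card := by
            unfold rowB
            have : ((Finset.Icc 1 (n - 1)) \ Sf).filter (fun z => z < (n - 1) + 1)
                = (Finset.Icc 1 (n - 1)) \ Sf := by
              rw [Finset.filter_eq_self]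
              intro z hz
              have := hZb z hz
              omega
            rw [this]
          have hstep : ∀ a, rowB n Sf (a + 1) ≤ rowB n Sf a + 1 := by
            intro a
            unfold rowB
            have := AlgPf.stepf_step ((Finset.Icc 1 (n - 1)) \ Sf) a
            omega
          obtain ⟨v, hv1, hv2⟩ := AlgPf.ivt (fun v => rowB n Sf v) hstep
            (fun a b hab => AlgPf.rowB_mono (n := n) Sf hab) (n - 1) m
            (by show rowB n Sf 0 ≤ m; omega) (by show m ≤ rowB n Sf (n - 1); omega)
          refine ⟨⟨v, by omega⟩, Finset.mem_univ _, ?_⟩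
          exact hv2
  · -- wsrc = w0α
    apply Equiv.ext
    intro p
    have h1 : u (wsrc p) = boxOf Sf ρ (w0α (wsrc p)) := hu2 (wsrc p)
    have h2 : r p = boxOf Sf ρ p := hr2 p
    have h3 : boxOf Sf ρ (w0α (wsrc p)) = boxOf Sf ρ p := by
      rw [← h1, ← h2]; exact hwsrc p
    have h4 : w0α (wsrc p) = p := hBinj h3
    have := congrArg w0α h4
    rw [hww] at this
    exact this
  · -- wsink = ρ
    apply Equiv.ext
    intro p
    have h1 : t (wsink p) = boxOf Sf ρ (ρ⁻¹ (wsink p)) := ht2 (wsink p)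
    have h2 : r p = boxOf Sf ρ p := hr2 p
    have h3 : boxOf Sf ρ (ρ⁻¹ (wsink p)) = boxOf Sf ρ p := by
      rw [← h1, ← h2]; exact hwsink p
    have h4 : ρ⁻¹ (wsink p) = p := hBinj h3
    have := congrArg ρ h4
    rwa [Equiv.Perm.apply_inv_self] at this
  · -- Σ_R(P_D)
    have hrev2 : (Fin.revPerm : Perm (Fin n)) * Fin.revPerm = 1 := by
      apply Equiv.ext
      intro x
      simp [Fin.rev_rev]
    have hrevinv : (Fin.revPerm : Perm (Fin n))⁻¹ = Fin.revPerm :=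
      inv_eq_of_mul_eq_one_right hrev2
    ext γ
    simp only [SigmaRD, Set.mem_setOf_eq, Set.mem_image, leftInterval]
    set δ : Perm (Fin n) := γ⁻¹ * Fin.revPerm with hδ
    have hδap : ∀ p : Fin n, δ p = γ⁻¹ (Fin.rev p) := fun p => rfl
    have key : (∀ i j : Fin n,
        ((e i).1 ≤ (e j).1 ∧ (e i).2 ≤ (e j).2 ∧ i ≠ j) → γ⁻¹ i < γ⁻¹ j) ↔
        (∀ p q : Fin n, colB ρ ((ρ p : Fin n) : ℕ) ≤ colB ρ ((ρ q : Fin n) : ℕ) →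
          rowB n Sf ((p : Fin n) : ℕ) ≤ rowB n Sf ((q : Fin n) : ℕ) → p ≠ q → δ p < δ q) := by
      constructor
      · intro hcond p q hcol hrow hne
        have h2 := hcond (Fin.rev p) (Fin.rev q) ?_
        · rw [hδap p, hδap q]
          exact h2
        · simp only [he2, Fin.rev_rev, boxOf_fst, boxOf_snd]
          exact ⟨hcol, hrow, fun hc => hne (Fin.rev_injective hc)⟩
      · intro hcond i j hc
        obtain ⟨hc1, hc2, hc3⟩ := hc
        simp only [he2, boxOf_fst, boxOf_snd] at hc1 hc2
        have h2 := hcond (Fin.rev i) (Fin.rev j) hc1 hc2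
          (fun hc => hc3 (Fin.rev_injective hc))
        simp only [hδap, Fin.rev_rev] at h2
        exact h2
    have key2 : (∀ p q : Fin n, colB ρ ((ρ p : Fin n) : ℕ) ≤ colB ρ ((ρ q : Fin n) : ℕ) →
          rowB n Sf ((p : Fin n) : ℕ) ≤ rowB n Sf ((q : Fin n) : ℕ) → p ≠ q → δ p < δ q) ↔
        (AlgPf.finInv w0α ⊆ AlgPf.finInv δ ∧ AlgPf.finInv δ ⊆ AlgPf.finInv ρ) := by
      constructor
      · intro hcond
        constructor
        · intro x hx
          rw [hInvW, Finset.mem_filter] at hx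
          obtain ⟨-, hpq, hrow⟩ := hx
          rw [AlgPf.mem_finInv]
          refine ⟨hpq, ?_⟩
          exact hcond x.2 x.1 (le_of_lt (F2 hpq hrow)) (le_of_eq hrow.symm)
            (fun hc => (ne_of_lt hpq) hc.symm)
        · intro x hx
          obtain ⟨hpq, hδx⟩ := AlgPf.mem_finInv.mp hx
          rw [AlgPf.mem_finInv]
          refine ⟨hpq, ?_⟩
          rcases lt_trichotomy (ρ x.2) (ρ x.1) with h | h | h
          · exact h
          · exact absurd (ρ.injective h) (fun hc => (ne_of_lt hpq) hc.symm)
          · exfalso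
            have := hcond x.1 x.2 (AlgPf.colB_mono ρ (le_of_lt h))
              (AlgPf.rowB_mono Sf (le_of_lt hpq)) (ne_of_lt hpq)
            exact absurd (lt_trans this hδx) (lt_irrefl _)
      · rintro ⟨hsub1, hsub2⟩ p q hcol hrow hne
        rcases lt_trichotomy p q with h | h | h
        · by_contra hc
          have hδne : δ p ≠ δ q := fun hc2 => hne (δ.injective hc2)
          have hδlt : δ q < δ p := by
            rcases lt_trichotomy (δ p) (δ q) with h2 | h2 | h2
            · exact absurd h2 hc
            · exact absurd h2 hδne
            · exact h2
          have : (p, q) ∈ AlgPf.finInv ρ := hsub2 (AlgPf.mem_finInv.mpr ⟨h, hδlt⟩)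
          have hρ : ρ q < ρ p := (AlgPf.mem_finInv.mp this).2
          have := AlgPf.colB_lt_of_inv_gt ρ hρ
            (by simp only [Equiv.Perm.inv_apply_self]; exact h)
          omega
        · exact absurd h hne
        · have hroweq : rowB n Sf ((q : Fin n) : ℕ) = rowB n Sf ((p : Fin n) : ℕ) := by
            have := AlgPf.rowB_mono (n := n) Sf (le_of_lt h : (q : ℕ) ≤ (p : ℕ))
            omega
          have : (q, p) ∈ AlgPf.finInv w0α := by
            rw [hInvW, Finset.mem_filter]
            exact ⟨Finset.mem_univ _, h, hroweq⟩
          exact (AlgPf.mem_finInv.mp (hsub1 this)).2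
    rw [key, key2]
    constructor
    · rintro ⟨hsub1, hsub2⟩
      refine ⟨δ, ⟨AlgPf.leftWeakLe_iff_finInv_subset.mpr hsub1,
        AlgPf.leftWeakLe_iff_finInv_subset.mpr hsub2⟩, ?_⟩
      rw [hδ, mul_inv_rev, inv_inv, hrevinv, ← mul_assoc, hrev2, one_mul]
    · rintro ⟨δ', ⟨hδ1, hδ2⟩, hγ⟩
      have hδeq : δ = δ' := by
        rw [hδ, ← hγ, mul_inv_rev, mul_assoc, inv_inv]
        rw [hrevinv, hrev2, mul_one]
      rw [hδeq]
      exact ⟨AlgPf.leftWeakLe_iff_finInv_subset.mp hδ1,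
        AlgPf.leftWeakLe_iff_finInv_subset.mp hδ2⟩
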